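/- Let 2 ≤ dA ≤ dB and d = dA·dB. Suppose a complete set of d+1 pairwise mutually unbiased orthonormal bases of EuclideanSpace ℂ (Fin dA × Fin dB) contains dA+1 bases all of whose vectors are product vectors u ⊗ v. Then every vector of each of the remaining d − dA bases is maximally entangled, i.e. has subsystem purity P(ψ) = 1/dA. -/

import Mathlib

/-- Purity of the reduced density operator on subsystem `A`. -/
noncomputable def purity {dA dB : ℕ} (ψ : EuclideanSpace ℂ (Fin dA × Fin dB)) : ℝ :=
  ∑ a : Fin dA, ∑ a' : Fin dA,
    ‖∑ b : Fin dB, ψ (a, b) * (starRingEnd ℂ) (ψ (a', b))‖ ^ 2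

/-- A product vector `(u ⊗ v)(a,b) = u(a)·v(b)`. -/
def IsProductVector {dA dB : ℕ} (ψ : EuclideanSpace ℂ (Fin dA × Fin dB)) : Prop :=
  ∃ (u : EuclideanSpace ℂ (Fin dA)) (v : EuclideanSpace ℂ (Fin dB)),
    ∀ (a : Fin dA) (b : Fin dB), ψ (a, b) = u a * v b

set_option linter.unusedSectionVars false

namespace MUBAux

local notation "cconj" => starRingEnd ℂ

lemma inner_euc {κ : Type*} [Fintype κ] (x y : EuclideanSpace ℂ κ) :
    (inner ℂ x y : ℂ) = ∑ i, cconj (x i) * y i := by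
  simp [PiLp.inner_apply, RCLike.inner_apply]
  exact Finset.sum_congr rfl fun _ _ => mul_comm _ _

variable {ι : Type*} [Fintype ι] [DecidableEq ι]

/-- `E ⊗ E` viewed as a vector (matrix of the projector). Index `W = ((p,r),(q,s))`. -/
noncomputable def Xvec (E : ι → ℂ) : EuclideanSpace ℂ ((ι × ι) × (ι × ι)) :=
  WithLp.toLp 2 fun W : (ι × ι) × (ι × ι) => E W.1.1 * E W.1.2 * cconj (E W.2.1 * E W.2.2)

noncomputable def Ivec : EuclideanSpace ℂ ((ι × ι) × (ι × ι)) :=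
  WithLp.toLp 2 fun W : (ι × ι) × (ι × ι) => (if W.1.1 = W.2.1 then (1:ℂ) else 0) * (if W.1.2 = W.2.2 then 1 else 0)

noncomputable def Svec : EuclideanSpace ℂ ((ι × ι) × (ι × ι)) :=
  WithLp.toLp 2 fun W : (ι × ι) × (ι × ι) => (if W.1.1 = W.2.2 then (1:ℂ) else 0) * (if W.1.2 = W.2.1 then 1 else 0)

lemma fact4 (f g h k : ι → ℂ) :
    ∑ p : ι, ∑ r : ι, ∑ q : ι, ∑ s : ι, f p * g r * (h q * k s)
      = (∑ p, f p) * (∑ r, g r) * ((∑ q, h q) * (∑ s, k s)) := by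
  simp only [← Finset.mul_sum, ← Finset.sum_mul]

lemma inner_Xvec (E F : ι → ℂ) :
    (inner ℂ (Xvec E) (Xvec F) : ℂ)
      = (∑ p, cconj (E p) * F p) * (∑ p, cconj (E p) * F p)
        * ((∑ p, E p * cconj (F p)) * (∑ p, E p * cconj (F p))) := by
  rw [inner_euc, ← fact4]
  simp only [Fintype.sum_prod_type, Xvec, PiLp.toLp_apply]
  refine Finset.sum_congr rfl fun p _ => Finset.sum_congr rfl fun r _ =>
    Finset.sum_congr rfl fun q _ => Finset.sum_congr rfl fun s _ => ?_
  simp only [map_mul, Complex.conj_conj]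
  ring

lemma inner_Xvec_Ivec (E : ι → ℂ) :
    (inner ℂ (Xvec E) Ivec : ℂ)
      = (∑ p, cconj (E p) * E p) * (∑ p, cconj (E p) * E p) := by
  rw [inner_euc]
  simp only [Fintype.sum_prod_type, Xvec, Ivec, PiLp.toLp_apply, map_mul, mul_ite, mul_one, mul_zero,
    ite_mul, zero_mul, one_mul, Finset.sum_ite_eq, Finset.sum_ite_eq', Finset.mem_univ,
    if_true]
  rw [Finset.sum_mul_sum]
  refine Finset.sum_congr rfl fun p _ => Finset.sum_congr rfl fun r _ => ?_
  simp only [Finset.sum_ite_eq, Finset.sum_ite_eq', Finset.mem_univ, if_true, mul_ite,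
    mul_zero, mul_one, ite_mul, zero_mul, one_mul, Finset.sum_ite_irrel, Finset.sum_const_zero,
    Complex.conj_conj]
  ring

lemma inner_Xvec_Svec (E : ι → ℂ) :
    (inner ℂ (Xvec E) Svec : ℂ)
      = (∑ p, cconj (E p) * E p) * (∑ p, cconj (E p) * E p) := by
  rw [inner_euc]
  simp only [Fintype.sum_prod_type, Xvec, Svec, PiLp.toLp_apply, map_mul, mul_ite, mul_one, mul_zero,
    ite_mul, zero_mul, one_mul, Finset.sum_ite_eq, Finset.sum_ite_eq', Finset.mem_univ,
    if_true]
  rw [Finset.sum_mul_sum]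
  refine Finset.sum_congr rfl fun p _ => Finset.sum_congr rfl fun r _ => ?_
  simp only [Finset.sum_ite_eq, Finset.sum_ite_eq', Finset.mem_univ, if_true, mul_ite,
    mul_zero, mul_one, ite_mul, zero_mul, one_mul, Finset.sum_ite_irrel, Finset.sum_const_zero,
    Complex.conj_conj]
  ring

lemma inner_Ivec_Ivec : (inner ℂ (Ivec (ι := ι)) Ivec : ℂ) = (Fintype.card ι : ℂ)^2 := by
  rw [inner_euc]
  simp [Fintype.sum_prod_type, Ivec, apply_ite cconj, Finset.sum_ite_eq, Finset.sum_ite_eq',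
    Finset.card_univ, sq]

lemma inner_Svec_Svec : (inner ℂ (Svec (ι := ι)) Svec : ℂ) = (Fintype.card ι : ℂ)^2 := by
  rw [inner_euc]
  simp [Fintype.sum_prod_type, Svec, apply_ite cconj, Finset.sum_ite_eq, Finset.sum_ite_eq',
    Finset.card_univ, sq]

lemma inner_Ivec_Svec : (inner ℂ (Ivec (ι := ι)) Svec : ℂ) = (Fintype.card ι : ℂ) := by
  rw [inner_euc]
  simp [Fintype.sum_prod_type, Ivec, Svec, apply_ite cconj, Finset.sum_ite_eq,
    Finset.sum_ite_eq', Finset.card_univ]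

lemma inner_Svec_Ivec : (inner ℂ (Svec (ι := ι)) Ivec : ℂ) = (Fintype.card ι : ℂ) := by
  rw [inner_euc]
  simp [Fintype.sum_prod_type, Ivec, Svec, apply_ite cconj, Finset.sum_ite_eq,
    Finset.sum_ite_eq', Finset.card_univ]

theorem Tsum_eq {d : ℕ} (hd : Fintype.card ι = d) (hd0 : 0 < d)
    (e : Fin (d+1) → OrthonormalBasis (Fin d) ℂ (EuclideanSpace ℂ ι))
    (hmub : ∀ m n, m ≠ n → ∀ j k, ‖(inner ℂ (e m j) (e n k) : ℂ)‖ ^ 2 = 1 / d) :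
    (∑ μ : Fin (d+1) × Fin d, Xvec (fun i => e μ.1 μ.2 i)) = Ivec + Svec := by
  have horto : ∀ m (j k : Fin d), (inner ℂ (e m j) (e m k) : ℂ) = if j = k then 1 else 0 :=
    fun m => orthonormal_iff_ite.mp (e m).orthonormal
  have hsum1 : ∀ m j, ∑ p, cconj (e m j p) * e m j p = 1 := by
    intro m j
    have h := horto m j j
    rw [inner_euc] at h
    simpa using h
  have hzconj : ∀ (m n : Fin (d+1)) (j k : Fin d),
      ∑ p, (e m j p) * cconj (e n k p) = cconj (∑ p, cconj (e m j p) * e n k p) := by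
    intro m n j k
    rw [map_sum]
    exact Finset.sum_congr rfl fun p _ => by simp [mul_comm]
  set c : ℂ := (((1:ℝ)/(d:ℝ) : ℝ) : ℂ)^2 with hc
  have hXX : ∀ (m n : Fin (d+1)) (j k : Fin d),
      (inner ℂ (Xvec (fun i => e m j i)) (Xvec (fun i => e n k i)) : ℂ)
        = if m = n then (if j = k then 1 else 0) else c := by
    intro m n j k
    rw [inner_Xvec, hzconj]
    have hw : ∑ p, cconj (e m j p) * e n k p = (inner ℂ (e m j) (e n k) : ℂ) :=
      (inner_euc _ _).symm
    by_cases h : m = n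
    · subst h
      rw [hw, horto, if_pos rfl]
      split_ifs <;> simp
    · rw [if_neg h]
      have habs := hmub m n h j k
      have hmc : (inner ℂ (e m j) (e n k) : ℂ) * cconj (inner ℂ (e m j) (e n k) : ℂ)
          = (((1:ℝ)/(d:ℝ) : ℝ) : ℂ) := by
        rw [Complex.mul_conj, ← Complex.sq_norm, habs]
      calc (∑ p, cconj (e m j p) * e n k p) * (∑ p, cconj (e m j p) * e n k p) *
            (cconj (∑ p, cconj (e m j p) * e n k p) * cconj (∑ p, cconj (e m j p) * e n k p))
          = ((∑ p, cconj (e m j p) * e n k p) * cconj (∑ p, cconj (e m j p) * e n k p))^2 := by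
            ring
        _ = c := by rw [hw, hmc, hc]
  have hXI : ∀ m j, (inner ℂ (Xvec (fun i => e m j i)) Ivec : ℂ) = 1 := by
    intro m j; rw [inner_Xvec_Ivec, hsum1]; ring
  have hXS : ∀ m j, (inner ℂ (Xvec (fun i => e m j i)) Svec : ℂ) = 1 := by
    intro m j; rw [inner_Xvec_Svec, hsum1]; ring
  set T := ∑ μ : Fin (d+1) × Fin d, Xvec (fun i => e μ.1 μ.2 i) with hTdef
  have hTI : (inner ℂ T Ivec : ℂ) = ((d:ℂ)+1) * d := by
    rw [hTdef, sum_inner]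
    rw [Finset.sum_congr rfl fun μ _ => hXI μ.1 μ.2]
    simp [Finset.card_univ]
  have hTS : (inner ℂ T Svec : ℂ) = ((d:ℂ)+1) * d := by
    rw [hTdef, sum_inner]
    rw [Finset.sum_congr rfl fun μ _ => hXS μ.1 μ.2]
    simp [Finset.card_univ]
  have hIT : (inner ℂ Ivec T : ℂ) = ((d:ℂ)+1) * d := by
    rw [← inner_conj_symm, hTI]
    simp
  have hST : (inner ℂ Svec T : ℂ) = ((d:ℂ)+1) * d := by
    rw [← inner_conj_symm, hTS]
    simp
  have hII : (inner ℂ (Ivec (ι := ι)) Ivec : ℂ) = (d:ℂ)^2 := by rw [inner_Ivec_Ivec, hd]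
  have hSS : (inner ℂ (Svec (ι := ι)) Svec : ℂ) = (d:ℂ)^2 := by rw [inner_Svec_Svec, hd]
  have hIS : (inner ℂ (Ivec (ι := ι)) Svec : ℂ) = (d:ℂ) := by rw [inner_Ivec_Svec, hd]
  have hSI : (inner ℂ (Svec (ι := ι)) Ivec : ℂ) = (d:ℂ) := by rw [inner_Svec_Ivec, hd]
  have hcval : (d:ℂ)^2 * c = 1 := by
    rw [hc]
    have h1 : (d:ℝ) ≠ 0 := Nat.cast_ne_zero.mpr hd0.ne'
    have h2 : (d:ℂ) ≠ 0 := Nat.cast_ne_zero.mpr hd0.ne'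
    push_cast
    field_simp
  have hTT : (inner ℂ T T : ℂ) = 2 * d * ((d:ℂ)+1) := by
    rw [hTdef]
    simp only [sum_inner, inner_sum]
    rw [Finset.sum_congr rfl fun μ _ => Finset.sum_congr rfl fun ν _ => hXX ν.1 μ.1 ν.2 μ.2]
    rw [Fintype.sum_prod_type]
    have hddc : (d:ℂ) * ((d:ℂ) * c) = 1 := by rw [← hcval]; ring
    have step1 : ∀ (m : Fin (d+1)) (j : Fin d), ∑ ν : Fin (d+1) × Fin d,
        (if ν.1 = m then (if ν.2 = j then (1:ℂ) else 0) else c)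
        = ∑ n : Fin (d+1), (if n = m then (1:ℂ) else (d:ℂ) * c) := by
      intro m j
      rw [Fintype.sum_prod_type]
      refine Finset.sum_congr rfl fun n _ => ?_
      by_cases h : n = m <;>
        simp [h, Finset.sum_ite_eq, Finset.sum_ite_eq', Finset.card_univ, mul_comm]
    rw [Finset.sum_congr rfl fun m _ => Finset.sum_congr rfl fun j _ => step1 m j]
    have step2 : ∀ m : Fin (d+1), ∑ n : Fin (d+1), (if n = m then (1:ℂ) else (d:ℂ) * c)
        = 1 + (d:ℂ) * ((d:ℂ) * c) := by
      intro m
      have hrw : ∀ n : Fin (d+1), (if n = m then (1:ℂ) else (d:ℂ) * c)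
          = (d:ℂ) * c + (if n = m then 1 - (d:ℂ)*c else 0) := by
        intro n; split_ifs <;> ring
      simp only [hrw, Finset.sum_add_distrib, Finset.sum_const, Finset.card_univ,
        Fintype.card_fin, Finset.sum_ite_eq, Finset.sum_ite_eq', Finset.mem_univ, if_true,
        nsmul_eq_mul]
      push_cast
      ring
    rw [Finset.sum_congr rfl fun m _ => Finset.sum_congr rfl fun j _ => step2 m]
    rw [Finset.sum_congr rfl fun m _ => (rfl : (∑ _j : Fin d, (1 + (d:ℂ) * ((d:ℂ) * c))) = _)]
    simp only [hddc, Finset.sum_const, Finset.card_univ, Fintype.card_fin, nsmul_eq_mul]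
    push_cast
    ring
  have hzero : (inner ℂ (T - Ivec - Svec) (T - Ivec - Svec) : ℂ) = 0 := by
    simp only [inner_sub_left, inner_sub_right, hTT, hTI, hTS, hIT, hST, hII, hIS, hSI, hSS]
    ring
  have h0 : T - Ivec - Svec = 0 := inner_self_eq_zero.mp hzero
  have : T - (Ivec + Svec) = 0 := by rw [← h0]; abel
  exact sub_eq_zero.mp this


noncomputable def Yvec {α β : Type*} [DecidableEq α] [DecidableEq β] :
    EuclideanSpace ℂ (((α×β) × (α×β)) × ((α×β) × (α×β))) :=
  WithLp.toLp 2 fun W : ((α×β) × (α×β)) × ((α×β) × (α×β)) => (if W.1.1.1 = W.2.2.1 then (1:ℂ) else 0) * (if W.1.1.2 = W.2.1.2 then 1 else 0) *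
    ((if W.1.2.1 = W.2.1.1 then 1 else 0) * (if W.1.2.2 = W.2.2.2 then 1 else 0))

variable {α β : Type*} [Fintype α] [Fintype β] [DecidableEq α] [DecidableEq β]

lemma inner_Ivec_Yvec :
    (inner ℂ (Ivec (ι := α × β)) Yvec : ℂ) = (Fintype.card α) * (Fintype.card β)^2 := by
  rw [inner_euc]
  simp [Ivec, Yvec, Fintype.sum_prod_type, Prod.ext_iff, ite_and, apply_ite cconj,
    Finset.sum_ite_eq, Finset.sum_ite_eq', Finset.card_univ, sq, mul_assoc]

lemma inner_Svec_Yvec :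
    (inner ℂ (Svec (ι := α × β)) Yvec : ℂ) = (Fintype.card α)^2 * (Fintype.card β) := by
  rw [inner_euc]
  simp [Svec, Yvec, Fintype.sum_prod_type, Prod.ext_iff, ite_and, apply_ite cconj,
    Finset.sum_ite_eq, Finset.sum_ite_eq', Finset.card_univ, sq, mul_assoc]
  exact Or.inl (mul_comm _ _)


section Purity

lemma purity_eq {dA dB : ℕ} (ψ : EuclideanSpace ℂ (Fin dA × Fin dB)) :
    ((purity ψ : ℝ) : ℂ) = (inner ℂ (Xvec (fun i => ψ i)) Yvec : ℂ) := by
  have habs : ∀ z : ℂ, ((‖z‖ : ℝ) : ℂ) ^ 2 = z * cconj z := fun z => by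
    rw [← Complex.ofReal_pow, Complex.sq_norm, Complex.mul_conj]
  have hL : ((purity ψ : ℝ) : ℂ) = ∑ a : Fin dA, ∑ a' : Fin dA, ∑ b : Fin dB, ∑ b' : Fin dB,
      ψ (a,b) * cconj (ψ (a',b)) * (cconj (ψ (a,b')) * ψ (a',b')) := by
    rw [purity]
    push_cast
    refine Finset.sum_congr rfl fun a _ => Finset.sum_congr rfl fun a' _ => ?_
    rw [habs, map_sum, Finset.sum_mul_sum]
    refine Finset.sum_congr rfl fun b _ => Finset.sum_congr rfl fun b' _ => ?_
    simp only [map_mul, Complex.conj_conj]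
  have hR : (inner ℂ (Xvec (fun i => ψ i)) Yvec : ℂ)
      = ∑ a' : Fin dA, ∑ b : Fin dB, ∑ a : Fin dA, ∑ b' : Fin dB,
        cconj (ψ (a',b)) * cconj (ψ (a,b')) * (ψ (a,b) * ψ (a',b')) := by
    rw [inner_euc]
    simp only [Xvec, Yvec, PiLp.toLp_apply, Fintype.sum_prod_type, map_mul, Complex.conj_conj,
      mul_ite, mul_one, mul_zero, ite_mul, zero_mul, one_mul,
      Finset.sum_ite_eq, Finset.sum_ite_eq', Finset.mem_univ, if_true,
      Finset.sum_ite_irrel, Finset.sum_const_zero, Prod.mk.eta]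
  rw [hL, hR]
  rw [Finset.sum_comm]
  refine Finset.sum_congr rfl fun a' _ => ?_
  rw [Finset.sum_comm]
  refine Finset.sum_congr rfl fun b _ => Finset.sum_congr rfl fun a _ =>
    Finset.sum_congr rfl fun b' _ => ?_
  ring


lemma unit_sum {dA dB : ℕ} (ψ : EuclideanSpace ℂ (Fin dA × Fin dB))
    (hunit : (inner ℂ ψ ψ : ℂ) = 1) :
    ∑ a : Fin dA, ∑ b : Fin dB, Complex.normSq (ψ (a,b)) = 1 := by
  rw [inner_euc, Fintype.sum_prod_type] at hunit
  have : ((∑ a : Fin dA, ∑ b : Fin dB, Complex.normSq (ψ (a,b)) : ℝ) : ℂ) = 1 := by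
    push_cast
    rw [← hunit]
    refine Finset.sum_congr rfl fun a _ => Finset.sum_congr rfl fun b _ => ?_
    rw [Complex.normSq_eq_conj_mul_self]
  exact_mod_cast this

lemma purity_product {dA dB : ℕ} (ψ : EuclideanSpace ℂ (Fin dA × Fin dB))
    (hunit : (inner ℂ ψ ψ : ℂ) = 1)
    (u : EuclideanSpace ℂ (Fin dA)) (v : EuclideanSpace ℂ (Fin dB))
    (hprod : ∀ a b, ψ (a,b) = u a * v b) : purity ψ = 1 := by
  set U : ℝ := ∑ a, Complex.normSq (u a) with hU
  set V : ℝ := ∑ b, Complex.normSq (v b) with hV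
  have hUV : U * V = 1 := by
    have h1 := unit_sum ψ hunit
    rw [hU, hV, Finset.sum_mul_sum]
    rw [← h1]
    refine Finset.sum_congr rfl fun a _ => Finset.sum_congr rfl fun b _ => ?_
    rw [hprod, Complex.normSq_mul]
  have hVc : ∑ b, v b * cconj (v b) = ((V : ℝ) : ℂ) := by
    rw [hV]
    push_cast
    exact Finset.sum_congr rfl fun b _ => (Complex.mul_conj _)
  have hstep : ∀ a a' : Fin dA, ∑ b, ψ (a,b) * cconj (ψ (a',b))
      = u a * cconj (u a') * ((V:ℝ):ℂ) := by
    intro a a'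
    rw [← hVc, Finset.mul_sum]
    refine Finset.sum_congr rfl fun b _ => ?_
    rw [hprod, hprod]
    simp only [map_mul]
    ring
  have hVnn : 0 ≤ V := Finset.sum_nonneg fun b _ => Complex.normSq_nonneg _
  have : purity ψ = ∑ a : Fin dA, ∑ a' : Fin dA,
      Complex.normSq (u a) * Complex.normSq (u a') * (V * V) := by
    rw [purity]
    refine Finset.sum_congr rfl fun a _ => Finset.sum_congr rfl fun a' _ => ?_
    rw [hstep, Complex.sq_norm, Complex.normSq_mul, Complex.normSq_mul, Complex.normSq_conj,
      Complex.normSq_ofReal]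
  rw [this]
  have h2 : ∑ a : Fin dA, ∑ a' : Fin dA, Complex.normSq (u a) * Complex.normSq (u a') * (V * V)
      = (U * V) * (U * V) := by
    rw [hU]
    simp only [← Finset.sum_mul, ← Finset.mul_sum]
    ring
  rw [h2, hUV]
  norm_num

lemma purity_ge {dA dB : ℕ} (hdA : 0 < dA) (ψ : EuclideanSpace ℂ (Fin dA × Fin dB))
    (hunit : (inner ℂ ψ ψ : ℂ) = 1) : 1/(dA:ℝ) ≤ purity ψ := by
  set t : Fin dA → ℝ := fun a => ∑ b, Complex.normSq (ψ (a,b)) with ht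
  have ht1 : ∑ a, t a = 1 := unit_sum ψ hunit
  have htnn : ∀ a, 0 ≤ t a := fun a => Finset.sum_nonneg fun b _ => Complex.normSq_nonneg _
  have hdiag : ∀ a, (t a)^2 = ‖∑ b, ψ (a,b) * cconj (ψ (a,b))‖ ^ 2 := by
    intro a
    have : (∑ b, ψ (a,b) * cconj (ψ (a,b))) = ((t a : ℝ) : ℂ) := by
      rw [ht]
      push_cast
      exact Finset.sum_congr rfl fun b _ => Complex.mul_conj _
    rw [this, Complex.norm_real, Real.norm_eq_abs, abs_of_nonneg (htnn a)]
  have h1 : ∑ a, (t a)^2 ≤ purity ψ := by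
    rw [purity]
    refine Finset.sum_le_sum fun a _ => ?_
    rw [hdiag a]
    exact Finset.single_le_sum (f := fun a' =>
      ‖∑ b, ψ (a,b) * cconj (ψ (a',b))‖ ^ 2)
      (fun a' _ => by positivity) (Finset.mem_univ a)
  have h2 : (1:ℝ) ≤ (dA:ℝ) * ∑ a, (t a)^2 := by
    have := sq_sum_le_card_mul_sum_sq (s := Finset.univ) (f := t)
    rw [ht1] at this
    simpa using this
  have hdA' : (0:ℝ) < (dA:ℝ) := by exact_mod_cast hdA
  calc 1/(dA:ℝ) ≤ ∑ a, (t a)^2 := by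
        rw [div_le_iff₀ hdA']
        linarith [h2]
    _ ≤ purity ψ := h1


end Purity

end MUBAux

open Finset in
/-- If a complete set of `dA·dB + 1` pairwise mutually unbiased orthonormal bases of
`ℂ^{dA} ⊗ ℂ^{dB}` (with `2 ≤ dA ≤ dB`) contains `dA + 1` product bases, then every vector
of each of the remaining bases is maximally entangled: its subsystem purity is `1/dA`. -/
theorem remaining_bases_maximally_entangled (dA dB : ℕ) (hA : 2 ≤ dA) (hAB : dA ≤ dB)
    (e : Fin (dA * dB + 1) →
      OrthonormalBasis (Fin (dA * dB)) ℂ (EuclideanSpace ℂ (Fin dA × Fin dB)))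
    (hmub : ∀ m n : Fin (dA * dB + 1), m ≠ n →
      ∀ j k : Fin (dA * dB),
        ‖(inner ℂ (e m j) (e n k) : ℂ)‖ ^ 2 = 1 / (dA * dB : ℝ))
    (g : Fin (dA + 1) → Fin (dA * dB + 1)) (hg : Function.Injective g)
    (hprod : ∀ (r : Fin (dA + 1)) (j : Fin (dA * dB)), IsProductVector (e (g r) j)) :
    ∀ m : Fin (dA * dB + 1), m ∉ Set.range g →
      ∀ j : Fin (dA * dB), purity (e m j) = 1 / (dA : ℝ) := by
  classical
  have hdA0 : 0 < dA := by omega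
  have hdB0 : 0 < dB := by omega
  have hd0 : 0 < dA * dB := Nat.mul_pos hdA0 hdB0
  have hunit : ∀ m j, (inner ℂ (e m j) (e m j) : ℂ) = 1 := by
    intro m j
    have := orthonormal_iff_ite.mp (e m).orthonormal j j
    simpa using this
  have hp1 : ∀ (r : Fin (dA+1)) (j : Fin (dA*dB)), purity (e (g r) j) = 1 := by
    intro r j
    obtain ⟨u, v, huv⟩ := hprod r j
    exact MUBAux.purity_product _ (hunit _ _) u v huv
  have hlb : ∀ m j, 1/(dA:ℝ) ≤ purity (e m j) :=
    fun m j => MUBAux.purity_ge hdA0 _ (hunit m j)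
  have hmub' : ∀ m n, m ≠ n → ∀ j k,
      ‖(inner ℂ (e m j) (e n k) : ℂ)‖^2 = 1/((dA*dB : ℕ):ℝ) := by
    intro m n h j k
    rw [hmub m n h j k]
    push_cast
    ring
  have hcard : Fintype.card (Fin dA × Fin dB) = dA * dB := by simp
  have hT := MUBAux.Tsum_eq hcard hd0 e hmub'
  have htotC : ∑ m, ∑ j, ((purity (e m j) : ℝ) : ℂ) = (dA:ℂ)*dB*dB + (dA:ℂ)*dA*dB := by
    calc ∑ m, ∑ j, ((purity (e m j) : ℝ) : ℂ)
        = ∑ μ : Fin (dA*dB+1) × Fin (dA*dB),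
            (inner ℂ (MUBAux.Xvec (fun i => e μ.1 μ.2 i)) MUBAux.Yvec : ℂ) := by
          rw [Fintype.sum_prod_type]
          exact Finset.sum_congr rfl fun m _ => Finset.sum_congr rfl fun j _ =>
            MUBAux.purity_eq _
      _ = (inner ℂ (∑ μ : Fin (dA*dB+1) × Fin (dA*dB), MUBAux.Xvec (fun i => e μ.1 μ.2 i))
            MUBAux.Yvec : ℂ) := (sum_inner _ _ _).symm
      _ = (inner ℂ (MUBAux.Ivec + MUBAux.Svec :
            EuclideanSpace ℂ (((Fin dA × Fin dB) × (Fin dA × Fin dB)) ×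
              ((Fin dA × Fin dB) × (Fin dA × Fin dB)))) MUBAux.Yvec : ℂ) := by rw [hT]
      _ = (dA:ℂ)*dB*dB + (dA:ℂ)*dA*dB := by
          rw [inner_add_left, MUBAux.inner_Ivec_Yvec, MUBAux.inner_Svec_Yvec]
          simp [Fintype.card_fin]
          ring
  have htot : ∑ m, ∑ j, purity (e m j) = (dA:ℝ)*dB*dB + (dA:ℝ)*dA*dB := by
    exact_mod_cast htotC
  set G : Finset (Fin (dA*dB+1)) := Finset.image g Finset.univ with hG
  have hGcard : G.card = dA + 1 := by
    rw [hG, Finset.card_image_of_injective _ hg, Finset.card_univ, Fintype.card_fin]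
  have hsumG : ∑ m ∈ G, ∑ j, purity (e m j) = ((dA:ℝ)+1) * (dA*dB) := by
    rw [hG, Finset.sum_image (fun x _ y _ h => hg h)]
    have : ∀ r : Fin (dA+1), ∑ j, purity (e (g r) j) = ∑ _j : Fin (dA*dB), (1:ℝ) :=
      fun r => Finset.sum_congr rfl fun j _ => hp1 r j
    rw [Finset.sum_congr rfl fun r _ => this r]
    simp [Finset.card_univ]
  have hsumGc : ∑ m ∈ Gᶜ, ∑ j, purity (e m j) = (dA:ℝ)*dB*dB - (dA:ℝ)*dB := by
    have hsplit := Finset.sum_add_sum_compl G (fun m => ∑ j, purity (e m j))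
    rw [hsumG, htot] at hsplit
    have hr : ((dA:ℝ)+1)*(dA*dB) = (dA:ℝ)*dA*dB + (dA:ℝ)*dB := by push_cast; ring
    rw [hr] at hsplit
    linarith
  have hle : dA ≤ dA * dB := Nat.le_mul_of_pos_right dA hdB0
  have hGc_card : ((Gᶜ).card : ℝ) = (dA:ℝ)*dB - dA := by
    rw [Finset.card_compl, hGcard, Fintype.card_fin]
    have : dA * dB + 1 - (dA + 1) = dA * dB - dA := by omega
    rw [this]
    push_cast [Nat.cast_sub hle]
    ring
  have hdA' : (dA:ℝ) ≠ 0 := Nat.cast_ne_zero.mpr hdA0.ne'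
  have hzero : ∑ m ∈ Gᶜ, (∑ j : Fin (dA*dB), (purity (e m j) - 1/(dA:ℝ))) = 0 := by
    have hstep : ∀ m, ∑ j : Fin (dA*dB), (purity (e m j) - 1/(dA:ℝ))
        = (∑ j, purity (e m j)) - ((dA*dB : ℕ):ℝ)*(1/(dA:ℝ)) := by
      intro m
      rw [Finset.sum_sub_distrib]
      simp [Finset.card_univ]
    rw [Finset.sum_congr rfl fun m _ => hstep m, Finset.sum_sub_distrib, hsumGc,
      Finset.sum_const, nsmul_eq_mul, hGc_card]
    push_cast
    field_simp
    ring
  have hnn : ∀ m ∈ Gᶜ, 0 ≤ ∑ j : Fin (dA*dB), (purity (e m j) - 1/(dA:ℝ)) :=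
    fun m _ => Finset.sum_nonneg fun j _ => by linarith [hlb m j]
  have hz2 := (Finset.sum_eq_zero_iff_of_nonneg hnn).mp hzero
  intro m hm j
  have hmGc : m ∈ Gᶜ := by
    rw [Finset.mem_compl, hG]
    intro hcon
    obtain ⟨r, _, hr⟩ := Finset.mem_image.mp hcon
    exact hm ⟨r, hr⟩
  have h3 := hz2 m hmGc
  have h4 := (Finset.sum_eq_zero_iff_of_nonneg
    (fun j _ => by linarith [hlb m j] : ∀ j ∈ Finset.univ,
      (0:ℝ) ≤ purity (e m j) - 1/(dA:ℝ))).mp h3 j (Finset.mem_univ j)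
  linarith
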